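/- γ is natural on V-categories: for every function f : X → Y and every V-category d_Y on Y, {q ∘ f | q ∈ γ_Y(d_Y)} = γ_X(d_Y ∘ (f × f)). -/

import Mathlib

variable {V : Type*}

/-- Residuation (internal hom) of a quantale. -/
def dres [CommMonoid V] [CompleteLattice V] (a c : V) : V := sSup {u | u * a ≤ c}

/-- The set of predicates non-expansive w.r.t. a \`V\`-graph \`d\`. -/
def gammaMap {X : Type*} [CommMonoid V] [CompleteLattice V] (d : X → X → V) : Set (X → V) :=
  {f | ∀ x₁ x₂, d x₁ x₂ ≤ dres (f x₁) (f x₂)}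

lemma le_dres_iff [CommMonoid V] [CompleteLattice V] [IsQuantale V] {u a c : V} :
    u ≤ dres a c ↔ u * a ≤ c :=
  Quantale.leftMulResiduation_le_iff_mul_le

/-- Naturality of γ on V-categories. -/
theorem stmt17 [CommMonoid V] [CompleteLattice V] [IsQuantale V]
    {X Y : Type*} (f : X → Y) (dY : Y → Y → V)
    (hrefl : ∀ y, (1 : V) ≤ dY y y)
    (htrans : ∀ x y z, dY x y * dY y z ≤ dY x z) :
    (fun q : Y → V => q ∘ f) '' gammaMap dY =
      gammaMap (fun x₁ x₂ => dY (f x₁) (f x₂)) := by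
  ext p
  constructor
  · rintro ⟨q, hq, rfl⟩ x₁ x₂
    exact hq (f x₁) (f x₂)
  · intro hp
    -- McShane–Whitney extension
    refine ⟨fun y => ⨆ x : X, dY (f x) y * p x, fun y₁ y₂ => ?_, ?_⟩
    · simp only []
      rw [le_dres_iff, Quantale.mul_iSup_distrib]
      refine iSup_le fun x => ?_
      calc dY y₁ y₂ * (dY (f x) y₁ * p x) = dY (f x) y₁ * dY y₁ y₂ * p x := by ac_rfl
        _ ≤ dY (f x) y₂ * p x := mul_le_mul_left (htrans (f x) y₁ y₂) _
        _ ≤ _ := le_iSup_of_le x le_rfl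
    · funext x
      simp only [Function.comp_apply]
      apply le_antisymm
      · refine iSup_le fun x' => ?_
        exact le_dres_iff.mp (hp x' x)
      · refine le_iSup_of_le x ?_
        calc p x = 1 * p x := (one_mul _).symm
        _ ≤ dY (f x) (f x) * p x := mul_le_mul_left (hrefl (f x)) _
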